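/- Let (Ω, μ) be a measure space, let W be a subspace of the space of measurable K-valued functions on Ω (K = ℝ or ℂ), let V be a vector space over K, and let A : W → V be a linear map. Suppose v ∈ V can be written as v = A f for some f ∈ W satisfying μ(supp f) < (1/2) Spark(A). Then f is the unique minimizer of μ(supp ·) among all solutions of the equation A g = v: for every g ∈ W with A g = v and g ≠ f one has μ(supp f) < μ(supp g). -/

import Mathlib

open MeasureTheory ENNReal

/-- The spark of a linear map `A : W → V`, where `W` is a subspace of the measurable
`K`-valued functions on a measure space `(Ω, μ)`:
`Spark(A) = inf { μ(supp f) : f ∈ ker A, f ≠ 0 }` (with `inf ∅ = ∞`). -/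
noncomputable def Spark {Ω K V : Type*} [MeasurableSpace Ω] [RCLike K]
    [AddCommGroup V] [Module K V] (μ : Measure Ω) (W : Submodule K (Ω → K))
    (A : W →ₗ[K] V) : ℝ≥0∞ :=
  sInf {m : ℝ≥0∞ | ∃ f : W, f ∈ LinearMap.ker A ∧ f ≠ 0 ∧
    m = μ (Function.support (f : Ω → K))}

/-- Continuous Donoho–Elad spark sparsity theorem, part (ii): if `v = A f` with
`μ(supp f) < (1/2) Spark(A)`, then `f` is the unique sparsest solution of `A g = v`. -/
theorem continuous_donoho_elad_spark_sparsity_two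
    {Ω K V : Type*} [MeasurableSpace Ω] [RCLike K]
    [AddCommGroup V] [Module K V] (μ : Measure Ω) (W : Submodule K (Ω → K))
    (hW : ∀ f ∈ W, Measurable f) (A : W →ₗ[K] V)
    (v : V) (f : W) (hf : A f = v)
    (hsupp : μ (Function.support (f : Ω → K)) < Spark μ W A / 2) :
    ∀ g : W, A g = v → g ≠ f →
      μ (Function.support (f : Ω → K)) < μ (Function.support (g : Ω → K)) := by
  intro g hg hne
  by_contra hle
  push_neg at hle
  have hker : g - f ∈ LinearMap.ker A := by
    simp [LinearMap.mem_ker, hg, hf]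
  have hne0 : g - f ≠ 0 := sub_ne_zero.mpr hne
  have hspark : Spark μ W A ≤ μ (Function.support ((g - f : W) : Ω → K)) :=
    sInf_le ⟨g - f, hker, hne0, rfl⟩
  have hsub : Function.support ((g - f : W) : Ω → K) ⊆
      Function.support (g : Ω → K) ∪ Function.support (f : Ω → K) := by
    intro x hx
    by_contra hx'
    simp only [Set.mem_union, Function.mem_support, not_or, not_not] at hx'
    apply hx
    show (g : Ω → K) x - (f : Ω → K) x = 0
    rw [hx'.1, hx'.2, sub_zero]
  have hmeas : μ (Function.support ((g - f : W) : Ω → K)) ≤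
      μ (Function.support (g : Ω → K)) + μ (Function.support (f : Ω → K)) :=
    le_trans (measure_mono hsub) (measure_union_le _ _)
  have h2 : 2 * μ (Function.support (f : Ω → K)) < Spark μ W A := by
    rwa [ENNReal.lt_div_iff_mul_lt (by norm_num) (by norm_num), mul_comm] at hsupp
  have : Spark μ W A ≤ 2 * μ (Function.support (f : Ω → K)) := by
    calc Spark μ W A ≤ μ (Function.support (g : Ω → K)) + μ (Function.support (f : Ω → K)) :=
          hspark.trans hmeas
      _ ≤ μ (Function.support (f : Ω → K)) + μ (Function.support (f : Ω → K)) := by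
          exact add_le_add hle le_rfl
      _ = 2 * μ (Function.support (f : Ω → K)) := (two_mul _).symm
  exact absurd (lt_of_le_of_lt this h2) (lt_irrefl _)
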